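/- Let f : ℝ → [0,1] be periodic with irrational period T, with f(0) = 1, and suppose there exist δ > 1 and q < 0 such that lim_{x→0} (f(x)-1)/|x|^δ = q. Then the set {f(n)^n : n ∈ ℕ} is dense in [0,1]. -/

import Mathlib

open Real Filter Topology

lemma stmt3_approx (ξ : ℝ) (hξ : Irrational ξ) (M : ℕ) :
    ∃ (N : ℕ) (p : ℤ), M < N ∧ 0 < |(N : ℝ) * ξ - p| ∧ |(N : ℝ) * ξ - p| < 1 / N := by
  classical
  have key : ∀ k : ℕ, 1 ≤ k → ∀ p : ℤ, 0 < |(k : ℝ) * ξ - p| := by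
    intro k hk p
    rw [abs_pos, sub_ne_zero]
    exact (hξ.natCast_mul (by omega)).ne_int p
  set F := Finset.Icc 1 (M + 1) with hF
  have hFne : F.Nonempty := ⟨1, by simp [hF]⟩
  set C := F.inf' hFne (fun k => |(k : ℝ) * ξ - round ((k : ℝ) * ξ)|) with hCdef
  have hC : 0 < C := by
    rw [hCdef, Finset.lt_inf'_iff]
    intro k hk
    exact key k (Finset.mem_Icc.mp hk).1 _
  obtain ⟨n, hn⟩ := exists_nat_gt (1 / C)
  have hn1 : 1 ≤ n := by
    by_contra h
    push_neg at h
    interval_cases n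
    simp at hn
    have := one_div_pos.mpr hC
    linarith
  obtain ⟨j, k, hk0, hkn, hjk⟩ := Real.exists_int_int_abs_mul_sub_le ξ (by omega : 0 < n)
  set N := k.toNat with hN
  have hkN : (k : ℝ) = (N : ℝ) := by
    rw [hN]
    exact_mod_cast (Int.toNat_of_nonneg hk0.le).symm
  have hN1 : 1 ≤ N := by omega
  have hbound : |(N : ℝ) * ξ - j| ≤ 1 / (n + 1) := by rw [← hkN]; exact hjk
  have hsmall : 1 / ((n : ℝ) + 1) < C := by
    rw [div_lt_iff₀ (by positivity)]
    rw [div_lt_iff₀ hC] at hn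
    nlinarith [hC]
  refine ⟨N, j, ?_, key N hN1 j, ?_⟩
  · by_contra h
    push_neg at h
    have hmem : N ∈ F := Finset.mem_Icc.mpr ⟨hN1, by omega⟩
    have h1 : C ≤ |(N : ℝ) * ξ - round ((N : ℝ) * ξ)| := Finset.inf'_le _ hmem
    have h2 : |(N : ℝ) * ξ - round ((N : ℝ) * ξ)| ≤ |(N : ℝ) * ξ - j| := round_le _ j
    linarith
  · have hlt : (N : ℝ) < (n : ℝ) + 1 := by
      have h3 : (N : ℕ) ≤ n := by omega
      have := Nat.cast_le (α := ℝ).mpr h3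
      linarith
    calc |(N : ℝ) * ξ - j| ≤ 1 / (n + 1) := hbound
      _ < 1 / N := by
        apply one_div_lt_one_div_of_lt
        · exact_mod_cast hN1
        · exact hlt

lemma stmt3_log_lb {u : ℝ} (h1 : -(1/2) ≤ u) (h2 : u ≤ 0) :
    u - 2 * u ^ 2 ≤ Real.log (1 + u) := by
  have hpos : 0 < 1 + u := by linarith
  have h3 : Real.log (1 + u)⁻¹ ≤ (1 + u)⁻¹ - 1 := Real.log_le_sub_one_of_pos (by positivity)
  rw [Real.log_inv] at h3
  have h4 : 1 - (1 + u)⁻¹ ≤ Real.log (1 + u) := by linarith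
  have h5 : u - 2 * u ^ 2 ≤ 1 - (1 + u)⁻¹ := by
    have he : 1 - (1 + u)⁻¹ = u / (1 + u) := by field_simp; ring
    rw [he, le_div_iff₀ hpos]
    nlinarith
  linarith

set_option maxHeartbeats 2000000 in
theorem stmt_3 (f : ℝ → ℝ) (hrange : ∀ x, f x ∈ Set.Icc (0:ℝ) 1)
    (T : ℝ) (hT : Irrational T) (hper : Function.Periodic f T)
    (h0 : f 0 = 1) (δ q : ℝ) (hδ : 1 < δ) (hq : q < 0)
    (hlim : Filter.Tendsto (fun x : ℝ => (f x - 1) / |x| ^ δ)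
      (nhdsWithin 0 {0}ᶜ) (nhds q)) :
    Set.Icc (0:ℝ) 1 ⊆ closure {x : ℝ | ∃ n : ℕ, 0 < n ∧ x = f n ^ n} := by
  classical
  have key : ∀ y ∈ Set.Ioo (0:ℝ) 1, y ∈ closure {x : ℝ | ∃ n : ℕ, 0 < n ∧ x = f n ^ n} := by
    rintro y ⟨hy0, hy1⟩
    rw [Metric.mem_closure_iff]
    intro ε hε
    -- basic setup
    have hT0 : T ≠ 0 := hT.ne_zero
    set t := |T| with htdef
    have ht0 : 0 < t := abs_pos.mpr hT0
    have htI : Irrational t := by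
      rcases abs_choice T with h | h
      · rwa [htdef, h]
      · rw [htdef, h]; exact hT.neg
    have hpt : Function.Periodic f t := by
      rcases abs_choice T with h | h
      · rwa [htdef, h]
      · rw [htdef, h]; exact hper.neg
    have hξ : Irrational t⁻¹ := htI.inv
    set L := Real.log y with hLdef
    have hL : L < 0 := Real.log_neg hy0 hy1
    set c := L / q with hcdef
    have hc : 0 < c := div_pos_of_neg_of_neg hL hq
    have hq' : 0 < |q| := abs_pos.mpr hq.ne
    have hq2 : (0:ℝ) < q ^ 2 := by nlinarith
    have hqc : q * c = L := by rw [hcdef, mul_comm]; exact div_mul_cancel₀ L hq.ne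
    -- ε'
    obtain ⟨ε', hε'0, hε'⟩ : ∃ ε' > 0, ∀ w : ℝ, |w - L| < ε' → |Real.exp w - y| < ε := by
      obtain ⟨d, hd0, hd⟩ := Metric.continuousAt_iff.mp Real.continuous_exp.continuousAt ε hε
      refine ⟨d, hd0, fun w hw => ?_⟩
      have := hd (show dist w L < d by rwa [Real.dist_eq])
      rwa [Real.dist_eq, Real.exp_log hy0] at this
    -- σ
    set σ := min |q| (ε' / (8 * c)) with hσdef
    have hσ0 : 0 < σ := lt_min hq' (by positivity)
    have hσq : σ ≤ |q| := min_le_left _ _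
    have hσε : σ * (2 * c) ≤ ε' / 4 := by
      have h1 : σ ≤ ε' / (8 * c) := min_le_right _ _
      have h2 : σ * (2 * c) ≤ (ε' / (8 * c)) * (2 * c) := by nlinarith
      have h3 : (ε' / (8 * c)) * (2 * c) = ε' / 4 := by field_simp; ring
      linarith
    -- η₁ from hlim
    obtain ⟨η₁, hη₁0, hη₁⟩ : ∃ η₁ > 0, ∀ x : ℝ, x ≠ 0 → |x| < η₁ →
        |(f x - 1) / |x| ^ δ - q| < σ := by
      obtain ⟨d, hd0, hd⟩ := Metric.tendsto_nhdsWithin_nhds.mp hlim σ hσ0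
      refine ⟨d, hd0, fun x hx hxd => ?_⟩
      have := hd (show x ∈ ({0}ᶜ : Set ℝ) from hx)
        (by rwa [Real.dist_eq, sub_zero])
      rwa [Real.dist_eq] at this
    -- τ
    set τ := min 1 (ε' / (4 * (|q| * c + 1))) with hτdef
    have hτ0 : 0 < τ := lt_min one_pos (by positivity)
    have hτ1 : τ ≤ 1 := min_le_left _ _
    have hτε : |q| * c * τ ≤ ε' / 4 := by
      have h1 : τ ≤ ε' / (4 * (|q| * c + 1)) := min_le_right _ _
      have h2 : 0 < |q| * c + 1 := by positivity
      have h3 : |q| * c * τ ≤ (|q| * c + 1) * (ε' / (4 * (|q| * c + 1))) := by nlinarith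
      have h4 : (|q| * c + 1) * (ε' / (4 * (|q| * c + 1))) = ε' / 4 := by field_simp
      linarith
    -- K, η
    set K := min (ε' / (64 * q ^ 2 * c)) (1 / (4 * |q|)) with hKdef
    have hK0 : 0 < K := lt_min (div_pos hε'0 (by nlinarith)) (one_div_pos.mpr (by nlinarith [hq']))
    set η := min (η₁ / 2) (K ^ δ⁻¹) with hηdef
    have hη0 : 0 < η := lt_min (by positivity) (Real.rpow_pos_of_pos hK0 _)
    have hδ0 : (0:ℝ) < δ := by linarith
    have hηδK : η ^ δ ≤ K := by
      calc η ^ δ ≤ (K ^ δ⁻¹) ^ δ :=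
            Real.rpow_le_rpow hη0.le (min_le_right _ _) hδ0.le
        _ = K := Real.rpow_inv_rpow hK0.le hδ0.ne'
    have hηη₁ : η < η₁ := lt_of_le_of_lt (min_le_left _ _) (by linarith)
    clear_value t L c σ τ K η
    -- s₀ from continuity
    obtain ⟨s₀, hs₀0, hs₀⟩ : ∃ s₀ > 0, ∀ s : ℝ, 0 ≤ s → s < s₀ →
        (1 + s) ^ (1 + δ) ≤ 1 + τ := by
      have hcont : ContinuousAt (fun s : ℝ => (1 + s) ^ (1 + δ)) 0 := by
        have h1 : ContinuousAt (fun x : ℝ => x ^ (1 + δ)) ((1:ℝ) + 0) :=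
          Real.continuousAt_rpow_const _ _ (Or.inl (by norm_num))
        exact h1.comp ((continuous_const.add continuous_id).continuousAt)
      obtain ⟨d, hd0, hd⟩ := Metric.continuousAt_iff.mp hcont τ hτ0
      refine ⟨d, hd0, fun s hs hsd => ?_⟩
      have h2 := hd (show dist s 0 < d by
        rw [Real.dist_eq, sub_zero, abs_of_nonneg hs]; exact hsd)
      rw [Real.dist_eq] at h2
      have h3 : ((1:ℝ) + 0) ^ (1 + δ) = 1 := by norm_num [Real.one_rpow]
      rw [h3] at h2
      have := abs_lt.mp h2
      linarith [this.2]
    -- m₀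
    obtain ⟨n₀, hn₀⟩ := exists_nat_gt (1 / s₀)
    have hn₀1 : 1 ≤ n₀ := by
      by_contra h
      push_neg at h
      interval_cases n₀
      simp at hn₀
      have := one_div_pos.mpr hs₀0
      linarith
    set m₀ := n₀ + 1 with hm₀def
    -- eventual conditions on N
    have hev1 : ∀ᶠ x : ℝ in atTop, x * (t / x) ^ δ * (m₀:ℝ) ^ (1 + δ) < c := by
      have htend : Tendsto (fun x : ℝ => x * (t / x) ^ δ * (m₀:ℝ) ^ (1 + δ))
          atTop (𝓝 0) := by
        have h1 : Tendsto (fun x : ℝ => t ^ δ * (m₀:ℝ) ^ (1 + δ) * x ^ (-(δ - 1)))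
            atTop (𝓝 (t ^ δ * (m₀:ℝ) ^ (1 + δ) * 0)) :=
          (tendsto_rpow_neg_atTop (by linarith)).const_mul _
        rw [mul_zero] at h1
        apply h1.congr'
        filter_upwards [eventually_gt_atTop (0:ℝ)] with x hx
        rw [Real.div_rpow ht0.le hx.le]
        rw [show -(δ - 1) = 1 - δ by ring, Real.rpow_sub hx, Real.rpow_one]
        field_simp
      exact htend.eventually (eventually_lt_nhds hc)
    have hev : ∀ᶠ N : ℕ in atTop,
        ((N:ℝ) * (t / N) ^ δ * (m₀:ℝ) ^ (1 + δ) < c ∧ 2 * c / η ^ δ ≤ (N:ℝ)) := by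
      filter_upwards [tendsto_natCast_atTop_atTop.eventually hev1,
        tendsto_natCast_atTop_atTop.eventually (eventually_ge_atTop (2 * c / η ^ δ))]
        with N h1 h2
      exact ⟨h1, h2⟩
    obtain ⟨N₁, hN₁⟩ := eventually_atTop.mp hev
    obtain ⟨N, p, hMN, hθ0', hθ1'⟩ := stmt3_approx t⁻¹ hξ N₁
    obtain ⟨hcond1, hcond2⟩ := hN₁ N (le_of_lt hMN)
    have hN1 : 1 ≤ N := by
      by_contra h
      push_neg at h
      interval_cases N
      simp at hθ0' hθ1'
      exact absurd hθ1' (by norm_num)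
    have hNpos : (0:ℝ) < N := by exact_mod_cast hN1
    -- θ, B
    set β := (N:ℝ) - p * t with hβdef
    set θ := |β| with hθdef
    have hβeq : β = t * ((N:ℝ) * t⁻¹ - p) := by
      rw [hβdef]; field_simp
    have hθ0 : 0 < θ := by
      rw [hθdef, hβeq, abs_mul, abs_of_pos ht0]
      exact mul_pos ht0 hθ0'
    have hθ1 : θ < t / N := by
      rw [hθdef, hβeq, abs_mul, abs_of_pos ht0]
      calc t * |(N:ℝ) * t⁻¹ - p| < t * (1 / N) := by
            exact mul_lt_mul_of_pos_left hθ1' ht0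
        _ = t / N := by ring
    set g : ℕ → ℝ := fun i => ((N:ℝ) * θ ^ δ) * (i:ℝ) ^ (1 + δ) with hgdef
    have hB0 : 0 < (N:ℝ) * θ ^ δ := mul_pos hNpos (Real.rpow_pos_of_pos hθ0 _)
    clear_value β θ
    have hgm₀ : g m₀ < c := by
      have h1 : θ ^ δ < (t / N) ^ δ := Real.rpow_lt_rpow hθ0.le hθ1 hδ0
      have hm₀pos : (0:ℝ) < (m₀:ℝ) ^ (1 + δ) :=
        Real.rpow_pos_of_pos (by positivity) _
      have h2 : (N:ℝ) * θ ^ δ * (m₀:ℝ) ^ (1 + δ)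
          < (N:ℝ) * (t / N) ^ δ * (m₀:ℝ) ^ (1 + δ) :=
        mul_lt_mul_of_pos_right (mul_lt_mul_of_pos_left h1 hNpos) hm₀pos
      calc g m₀ = (N:ℝ) * θ ^ δ * (m₀:ℝ) ^ (1 + δ) := by rw [hgdef]
        _ < (N:ℝ) * (t / N) ^ δ * (m₀:ℝ) ^ (1 + δ) := h2
        _ < c := hcond1
    -- find m
    have hPex : ∃ i : ℕ, c ≤ g (i + 1) := by
      obtain ⟨i, hi⟩ := exists_nat_ge (c / ((N:ℝ) * θ ^ δ))
      refine ⟨i, ?_⟩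
      have h1 : (1:ℝ) ≤ ((i + 1 : ℕ):ℝ) := by push_cast; linarith [Nat.cast_nonneg (α := ℝ) i]
      have h2 : ((i + 1 : ℕ):ℝ) ≤ ((i + 1 : ℕ):ℝ) ^ (1 + δ) := by
        calc ((i + 1 : ℕ):ℝ) = ((i + 1 : ℕ):ℝ) ^ (1:ℝ) := (Real.rpow_one _).symm
          _ ≤ _ := Real.rpow_le_rpow_of_exponent_le h1 (by linarith)
      have h3 : c / ((N:ℝ) * θ ^ δ) ≤ ((i + 1 : ℕ):ℝ) ^ (1 + δ) := by
        refine le_trans hi (le_trans ?_ h2)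
        push_cast; linarith
      rw [div_le_iff₀ hB0] at h3
      rw [hgdef]
      dsimp only
      linarith
    set j := Nat.find hPex with hjdef
    set m := j + 1 with hmdef
    have hgm : c ≤ g m := Nat.find_spec hPex
    have hmono : ∀ a b : ℕ, a ≤ b → g a ≤ g b := by
      intro a b hab
      apply mul_le_mul_of_nonneg_left _ hB0.le
      exact Real.rpow_le_rpow (by positivity) (by exact_mod_cast hab) (by linarith)
    have hm₀m : m₀ < m := by
      by_contra h
      push_neg at h
      have := le_trans hgm (hmono m m₀ h)
      linarith
    have hjm₀ : m₀ ≤ j := by omega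
    have hj1 : 1 ≤ j := by omega
    have hgj : g j < c := by
      have h1 := Nat.find_min hPex (show j - 1 < j by omega)
      push_neg at h1
      have h2 : j - 1 + 1 = j := by omega
      rwa [h2] at h1
    clear_value j m
    -- ratio bound
    have hjR : (0:ℝ) < (j:ℝ) := by exact_mod_cast hj1
    have hfrac : 1 / (j:ℝ) < s₀ := by
      have h1 : (1:ℝ) / s₀ < (j:ℝ) := by
        calc (1:ℝ) / s₀ < (n₀:ℝ) := hn₀
          _ ≤ (j:ℝ) := by exact_mod_cast by omega
      rw [div_lt_iff₀ hs₀0] at h1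
      rw [div_lt_iff₀ hjR]
      linarith [mul_comm s₀ (j:ℝ)]
    have hratio : (1 + 1 / (j:ℝ)) ^ (1 + δ) ≤ 1 + τ :=
      hs₀ _ (by positivity) hfrac
    have hmcast : ((m:ℕ):ℝ) = (1 + 1 / (j:ℝ)) * (j:ℝ) := by
      rw [hmdef]; push_cast; field_simp
    have hgm_eq : g m = (1 + 1 / (j:ℝ)) ^ (1 + δ) * g j := by
      rw [hgdef]
      dsimp only
      rw [hmcast, Real.mul_rpow (by positivity) (by positivity)]
      ring
    have hgj0 : 0 ≤ g j := by
      rw [hgdef]; positivity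
    have hA_up : g m ≤ (1 + τ) * c := by
      rw [hgm_eq]
      calc (1 + 1 / (j:ℝ)) ^ (1 + δ) * g j ≤ (1 + τ) * g j :=
            mul_le_mul_of_nonneg_right hratio hgj0
        _ ≤ (1 + τ) * c := mul_le_mul_of_nonneg_left hgj.le (by linarith)
    -- n, d, s
    set n := m * N with hndef
    have hn0 : 0 < n := Nat.mul_pos (by omega) (by omega)
    have hn0R : (0:ℝ) ≤ (n:ℝ) := Nat.cast_nonneg n
    have hmR : (0:ℝ) < (m:ℝ) := by exact_mod_cast (by omega : 0 < m)
    have hm1R : (1:ℝ) ≤ (m:ℝ) := by exact_mod_cast (by omega : 1 ≤ m)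
    have hnN : (N:ℝ) ≤ (n:ℝ) := by
      have h1 : N ≤ n := by
        rw [hndef]
        exact Nat.le_mul_of_pos_left N (by omega : 0 < m)
      exact_mod_cast h1
    set d := (m:ℝ) * θ with hddef
    have hd0 : 0 < d := mul_pos hmR hθ0
    clear_value n
    have hA : (n:ℝ) * d ^ δ = g m := by
      have hmδ : ((m:ℝ)) ^ (1 + δ) = (m:ℝ) * (m:ℝ) ^ δ := by
        rw [Real.rpow_add hmR, Real.rpow_one]
      have hdd : d ^ δ = (m:ℝ) ^ δ * θ ^ δ := by
        rw [hddef, Real.mul_rpow hmR.le hθ0.le]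
      rw [hgdef]
      dsimp only
      rw [hmδ, hdd, hndef]
      push_cast
      ring
    clear_value d
    have hAc_lo : c ≤ (n:ℝ) * d ^ δ := by rw [hA]; exact hgm
    have hAc_up : (n:ℝ) * d ^ δ ≤ (1 + τ) * c := by rw [hA]; exact hA_up
    have hAc_up2 : (n:ℝ) * d ^ δ ≤ 2 * c := by
      have := mul_le_mul_of_nonneg_right (show (1:ℝ) + τ ≤ 2 by linarith) hc.le
      linarith
    have hdδpos : 0 < d ^ δ := Real.rpow_pos_of_pos hd0 _
    have hηδpos : 0 < η ^ δ := Real.rpow_pos_of_pos hη0 _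
    -- d ≤ η
    have hdη : d ≤ η := by
      have h1 : (N:ℝ) * d ^ δ ≤ (n:ℝ) * d ^ δ :=
        mul_le_mul_of_nonneg_right hnN hdδpos.le
      have h3 : d ^ δ ≤ 2 * c / (N:ℝ) := by
        rw [le_div_iff₀ hNpos]; linarith
      have h4 : 2 * c / (N:ℝ) ≤ η ^ δ := by
        rw [div_le_iff₀ hNpos]
        rw [div_le_iff₀ hηδpos] at hcond2
        linarith
      exact (Real.rpow_le_rpow_iff hd0.le hη0.le hδ0).mp (le_trans h3 h4)
    have hdδη : d ^ δ ≤ K :=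
      le_trans (Real.rpow_le_rpow hd0.le hdη hδ0.le) hηδK
    -- periodicity
    set s := (m:ℝ) * β with hsdef
    have hfs : f (n:ℝ) = f s := by
      have h1 := hpt.sub_int_mul_eq (x := (n:ℝ)) ((m:ℤ) * p)
      have harg : (n:ℝ) - ((m:ℤ) * p : ℤ) * t = s := by
        rw [hsdef, hβdef, hndef]; push_cast; ring
      rw [harg] at h1
      exact h1.symm
    have hsabs : |s| = d := by
      rw [hsdef, hddef, abs_mul, Nat.abs_cast, ← hθdef]
    have hs0 : s ≠ 0 := by
      rw [← abs_pos, hsabs]; exact hd0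
    clear_value s
    -- f estimate
    have hfest : |f s - 1 - q * d ^ δ| ≤ σ * d ^ δ := by
      have h1 := hη₁ s hs0 (by rw [hsabs]; linarith)
      rw [hsabs] at h1
      have h2 : (f s - 1) / d ^ δ - q = (f s - 1 - q * d ^ δ) / d ^ δ := by
        field_simp
      rw [h2, abs_div, abs_of_pos hdδpos, div_lt_iff₀ hdδpos] at h1
      linarith
    -- u facts
    set u := f (n:ℝ) - 1 with hudef
    clear_value u
    have hu0 : u ≤ 0 := by
      have := (hrange (n:ℝ)).2; rw [hudef]; linarith
    have huest : |u - q * d ^ δ| ≤ σ * d ^ δ := by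
      rw [hudef, hfs]; exact hfest
    have huabs : |u| ≤ 2 * |q| * d ^ δ := by
      have h1 : |u| ≤ |u - q * d ^ δ| + |q * d ^ δ| := by
        calc |u| = |(u - q * d ^ δ) + q * d ^ δ| := by ring_nf
          _ ≤ _ := abs_add_le _ _
      have h2 : |q * d ^ δ| = |q| * d ^ δ := by
        rw [abs_mul, abs_of_pos hdδpos]
      have h3 := mul_le_mul_of_nonneg_right hσq hdδpos.le
      linarith
    have huhalf : -(1/2) ≤ u := by
      have h1 : |u| ≤ 2 * |q| * K := by
        have := mul_le_mul_of_nonneg_left hdδη (show (0:ℝ) ≤ 2 * |q| by positivity)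
        linarith
      have h2 : K ≤ 1 / (4 * |q|) := by rw [hKdef]; exact min_le_right _ _
      have h3 : 2 * |q| * K ≤ 1 / 2 := by
        have h4 : 2 * |q| * K ≤ 2 * |q| * (1 / (4 * |q|)) :=
          mul_le_mul_of_nonneg_left h2 (by positivity)
        have h5 : 2 * |q| * (1 / (4 * |q|)) = 1 / 2 := by
          field_simp [hq'.ne']
          ring
        linarith
      have := abs_le.mp (le_trans h1 h3)
      linarith [this.1]
    have hfn_pos : 0 < f (n:ℝ) := by
      have : f (n:ℝ) = 1 + u := by rw [hudef]; ring
      rw [this]; linarith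
    -- w
    set w := (n:ℝ) * Real.log (f (n:ℝ)) with hwdef
    clear_value w
    have hfneq : f (n:ℝ) = 1 + u := by rw [hudef]; ring
    have hlog_up : Real.log (f (n:ℝ)) ≤ u := by
      rw [hfneq]
      have := Real.log_le_sub_one_of_pos (show (0:ℝ) < 1 + u by linarith)
      linarith
    have hlog_lo : u - 2 * u ^ 2 ≤ Real.log (f (n:ℝ)) := by
      rw [hfneq]; exact stmt3_log_lb huhalf hu0
    have hw_up : w ≤ (n:ℝ) * u := by
      rw [hwdef]; exact mul_le_mul_of_nonneg_left hlog_up hn0R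
    have hw_lo : (n:ℝ) * u - 2 * ((n:ℝ) * u ^ 2) ≤ w := by
      rw [hwdef]
      have := mul_le_mul_of_nonneg_left hlog_lo hn0R
      linarith
    -- bound |n*u - L|
    have hnu : |(n:ℝ) * u - L| ≤ ε' / 2 := by
      have h1 : |(n:ℝ) * u - q * ((n:ℝ) * d ^ δ)| ≤ σ * ((n:ℝ) * d ^ δ) := by
        have hkey : (n:ℝ) * u - q * ((n:ℝ) * d ^ δ) = (n:ℝ) * (u - q * d ^ δ) := by
          ring
        rw [hkey, abs_mul, abs_of_nonneg hn0R]
        have h1a := mul_le_mul_of_nonneg_left huest hn0R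
        linarith
      have h2 : |q * ((n:ℝ) * d ^ δ) - q * c| ≤ |q| * (τ * c) := by
        rw [← mul_sub, abs_mul]
        have hτc : 0 ≤ τ * c := mul_nonneg hτ0.le hc.le
        have h2a : |(n:ℝ) * d ^ δ - c| ≤ τ * c :=
          abs_le.mpr ⟨by linarith, by linarith⟩
        exact mul_le_mul_of_nonneg_left h2a (abs_nonneg q)
      have h3 : σ * ((n:ℝ) * d ^ δ) ≤ σ * (2 * c) :=
        mul_le_mul_of_nonneg_left hAc_up2 hσ0.le
      rw [← hqc]
      calc |(n:ℝ) * u - q * c|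
          ≤ |(n:ℝ) * u - q * ((n:ℝ) * d ^ δ)| + |q * ((n:ℝ) * d ^ δ) - q * c| :=
            abs_sub_le _ _ _
        _ ≤ σ * (2 * c) + |q| * (τ * c) := by linarith
        _ ≤ ε' / 4 + ε' / 4 := by
            have h4 : |q| * (τ * c) = |q| * c * τ := by ring
            rw [h4]; linarith
        _ = ε' / 2 := by ring
    have hnu2 : 2 * ((n:ℝ) * u ^ 2) ≤ ε' / 4 := by
      have h1 : u ^ 2 ≤ (2 * |q| * d ^ δ) ^ 2 := by
        have h1a : |u| ^ 2 ≤ (2 * |q| * d ^ δ) ^ 2 :=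
          pow_le_pow_left₀ (abs_nonneg u) huabs 2
        rwa [sq_abs] at h1a
      have hsq : (2 * |q| * d ^ δ) ^ 2 = 4 * q ^ 2 * (d ^ δ) * (d ^ δ) := by
        rw [mul_pow, mul_pow, sq_abs]
        ring
      have h2 : (n:ℝ) * u ^ 2 ≤ 4 * q ^ 2 * (d ^ δ) * ((n:ℝ) * d ^ δ) := by
        have h2a : (n:ℝ) * u ^ 2 ≤ (n:ℝ) * (4 * q ^ 2 * (d ^ δ) * (d ^ δ)) := by
          apply mul_le_mul_of_nonneg_left _ hn0R
          rw [← hsq]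
          exact h1
        calc (n:ℝ) * u ^ 2 ≤ (n:ℝ) * (4 * q ^ 2 * (d ^ δ) * (d ^ δ)) := h2a
          _ = 4 * q ^ 2 * (d ^ δ) * ((n:ℝ) * d ^ δ) := by ring
      have h3 : 4 * q ^ 2 * (d ^ δ) * ((n:ℝ) * d ^ δ) ≤ 4 * q ^ 2 * K * (2 * c) := by
        have e1 : (0:ℝ) ≤ 4 * q ^ 2 * (d ^ δ) := by positivity
        have e2 : 4 * q ^ 2 * (d ^ δ) ≤ 4 * q ^ 2 * K :=
          mul_le_mul_of_nonneg_left hdδη (by positivity)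
        calc 4 * q ^ 2 * (d ^ δ) * ((n:ℝ) * d ^ δ)
            ≤ 4 * q ^ 2 * (d ^ δ) * (2 * c) := mul_le_mul_of_nonneg_left hAc_up2 e1
          _ ≤ 4 * q ^ 2 * K * (2 * c) := mul_le_mul_of_nonneg_right e2 (by linarith)
      have h4 : K ≤ ε' / (64 * q ^ 2 * c) := by rw [hKdef]; exact min_le_left _ _
      have h5 : 2 * (4 * q ^ 2 * K * (2 * c)) ≤ ε' / 4 := by
        have h6 : 16 * (q ^ 2 * c) * K ≤ 16 * (q ^ 2 * c) * (ε' / (64 * q ^ 2 * c)) :=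
          mul_le_mul_of_nonneg_left h4 (by positivity)
        have h7 : 16 * (q ^ 2 * c) * (ε' / (64 * q ^ 2 * c)) = ε' / 4 := by
          have hqne := hq.ne
          field_simp
          ring
        linarith
      linarith
    have hwL : |w - L| < ε' := by
      have h1 := abs_le.mp hnu
      have h2 : (0:ℝ) ≤ (n:ℝ) * u ^ 2 := by positivity
      rw [abs_lt]
      constructor
      · linarith
      · linarith
    -- conclude
    have hfinal : |f (n:ℝ) ^ n - y| < ε := by
      have heq : f (n:ℝ) ^ n = Real.exp w := by
        rw [hwdef, Real.exp_nat_mul, Real.exp_log hfn_pos]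
      rw [heq]
      exact hε' w hwL
    refine ⟨f (n:ℝ) ^ n, ⟨n, hn0, rfl⟩, ?_⟩
    rw [Real.dist_eq, abs_sub_comm]
    exact hfinal
  intro y hy
  have h1 : Set.Icc (0:ℝ) 1 = closure (Set.Ioo (0:ℝ) 1) :=
    (closure_Ioo (by norm_num)).symm
  rw [h1] at hy
  exact closure_minimal key isClosed_closure hy
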